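/- Suppose the graph is connected and Assumption (β) holds, and let Ω ⊆ V be finite, nonempty and Ω ≠ V. Then the smallest and the largest value of the real Rayleigh quotient of Δ̃^D_Ω sum to at most 2: inf{ Re (Δ̃^D_Ω f, f)_{β⁺} / (f,f)_{β⁺} : f : Ω → ℂ, f ≠ 0 } + sup{ Re (Δ̃^D_Ω f, f)_{β⁺} / (f,f)_{β⁺} : f : Ω → ℂ, f ≠ 0 } ≤ 2. -/

import Mathlib

open Function Complex

noncomputable def betaPlus {V : Type*} (b : V → V → ℝ) (x : V) : ℝ := ∑ᶠ y, b x y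
noncomputable def betaMinus {V : Type*} (b : V → V → ℝ) (x : V) : ℝ := ∑ᶠ y, b y x

/-- The graph is connected: any two vertices are joined by a chain of edges (in either
direction). -/
def GraphConnected {V : Type*} (b : V → V → ℝ) : Prop :=
  ∀ x y : V, ∃ (k : ℕ) (c : ℕ → V), c 0 = x ∧ c k = y ∧
    ∀ i < k, 0 < b (c i) (c (i + 1)) + b (c (i + 1)) (c i)

/-- Extension by zero of a function on `Ω` to all of `V`. -/
noncomputable def extendZero {V : Type*} [DecidableEq V] (Ω : Finset V) (f : ↥Ω → ℂ) :
    V → ℂ :=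
  fun x => if h : x ∈ Ω then f ⟨x, h⟩ else 0

/-- The Dirichlet normalized Laplacian on a finite set `Ω`:
`(Δ̃^D_Ω f)(x) = (1/β⁺(x)) Σ_y b(x,y)(f̃(x) − f̃(y))` where `f̃` extends `f` by zero. -/
noncomputable def dirichletLap {V : Type*} [DecidableEq V] (b : V → V → ℝ) (w : V → ℝ)
    (Ω : Finset V) (f : ↥Ω → ℂ) (x : ↥Ω) : ℂ :=
  (1 / (w (x : V) : ℂ)) *
    ∑ᶠ y : V, (b (x : V) y : ℂ) * (extendZero Ω f (x : V) - extendZero Ω f y)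

/-- The weighted inner product on functions on the finite set `Ω`. -/
noncomputable def innerF {V : Type*} (w : V → ℝ) (Ω : Finset V) (f g : ↥Ω → ℂ) : ℂ :=
  ∑ x : ↥Ω, (w (x : V) : ℂ) * f x * (starRingEnd ℂ) (g x)

section Aux

variable {V : Type*} [DecidableEq V]

lemma extendZero_coe (Ω : Finset V) (f : ↥Ω → ℂ) (x : ↥Ω) :
    extendZero Ω f (x : V) = f x := by
  simp [extendZero]

lemma extendZero_norm (Ω : Finset V) (f : ↥Ω → ℂ) (v : V) :
    extendZero Ω (fun x => (‖f x‖ : ℂ)) v = (‖extendZero Ω f v‖ : ℂ) := by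
  unfold extendZero
  split <;> simp

lemma innerF_self_re (w : V → ℝ) (Ω : Finset V) (f : ↥Ω → ℂ) :
    (innerF w Ω f f).re = ∑ v ∈ Ω, w v * Complex.normSq (extendZero Ω f v) := by
  rw [← Finset.sum_coe_sort Ω (fun v => w v * Complex.normSq (extendZero Ω f v))]
  unfold innerF
  rw [Complex.re_sum]
  refine Finset.sum_congr rfl fun x _ => ?_
  rw [extendZero_coe, mul_assoc, Complex.mul_conj, ← Complex.ofReal_mul,
    Complex.ofReal_re]

lemma betaPlus_eq_sum (b : V → V → ℝ)
    (hloc : ∀ x, {y | b x y ≠ 0 ∨ b y x ≠ 0}.Finite) (x : V) :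
    betaPlus b x = ∑ y ∈ (hloc x).toFinset, b x y := by
  apply finsum_eq_finset_sum_of_support_subset
  intro y hy
  simp only [Set.Finite.coe_toFinset, Set.mem_setOf_eq]
  exact Or.inl hy

lemma lap_energy (b : V → V → ℝ)
    (hloc : ∀ x, {y | b x y ≠ 0 ∨ b y x ≠ 0}.Finite)
    (hβp : ∀ x, betaPlus b x ≠ 0)
    (Ω : Finset V) (f : ↥Ω → ℂ) :
    (innerF (betaPlus b) Ω (dirichletLap b (betaPlus b) Ω f) f).re =
      (∑ v ∈ Ω, betaPlus b v * Complex.normSq (extendZero Ω f v)) -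
      ∑ v ∈ Ω, ∑ y ∈ (hloc v).toFinset,
        b v y * (extendZero Ω f y * (starRingEnd ℂ) (extendZero Ω f v)).re := by
  rw [← Finset.sum_sub_distrib,
    ← Finset.sum_coe_sort Ω (fun v => betaPlus b v * Complex.normSq (extendZero Ω f v)
      - ∑ y ∈ (hloc v).toFinset,
        b v y * (extendZero Ω f y * (starRingEnd ℂ) (extendZero Ω f v)).re)]
  unfold innerF dirichletLap
  rw [Complex.re_sum]
  refine Finset.sum_congr rfl fun x _ => ?_
  have hw : ((betaPlus b (x : V) : ℝ) : ℂ) ≠ 0 := by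
    exact_mod_cast hβp (x : V)
  have hS : (∑ᶠ y : V, (b (x : V) y : ℂ) * (extendZero Ω f (x : V) - extendZero Ω f y))
      = ∑ y ∈ (hloc (x : V)).toFinset,
          (b (x : V) y : ℂ) * (extendZero Ω f (x : V) - extendZero Ω f y) := by
    apply finsum_eq_finset_sum_of_support_subset
    intro y hy
    simp only [Set.Finite.coe_toFinset, Set.mem_setOf_eq]
    left
    intro h
    apply hy
    simp [h]
  rw [hS]
  have hmain : (betaPlus b (x : V) : ℂ) *
      ((1 / (betaPlus b (x : V) : ℂ)) *
        ∑ y ∈ (hloc (x : V)).toFinset,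
          (b (x : V) y : ℂ) * (extendZero Ω f (x : V) - extendZero Ω f y)) *
      (starRingEnd ℂ) (f x)
      = ∑ y ∈ (hloc (x : V)).toFinset,
          (b (x : V) y : ℂ) *
            ((extendZero Ω f (x : V) - extendZero Ω f y) *
              (starRingEnd ℂ) (extendZero Ω f (x : V))) := by
    rw [extendZero_coe, ← mul_assoc, mul_one_div_cancel hw, one_mul, Finset.sum_mul]
    exact Finset.sum_congr rfl fun y _ => mul_assoc _ _ _
  rw [hmain, Complex.re_sum]
  have hterm : ∀ y ∈ (hloc (x : V)).toFinset,
      ((b (x : V) y : ℂ) *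
        ((extendZero Ω f (x : V) - extendZero Ω f y) *
          (starRingEnd ℂ) (extendZero Ω f (x : V)))).re
      = b (x : V) y * Complex.normSq (extendZero Ω f (x : V))
        - b (x : V) y *
          (extendZero Ω f y * (starRingEnd ℂ) (extendZero Ω f (x : V))).re := by
    intro y _
    rw [Complex.re_ofReal_mul, sub_mul, Complex.sub_re, Complex.mul_conj,
      Complex.ofReal_re, mul_sub]
  rw [Finset.sum_congr rfl hterm, Finset.sum_sub_distrib, ← Finset.sum_mul,
    ← betaPlus_eq_sum b hloc]

lemma inner_sum_eq_omega (b : V → V → ℝ)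
    (hloc : ∀ x, {y | b x y ≠ 0 ∨ b y x ≠ 0}.Finite)
    (Ω : Finset V) (x : V) (t : V → ℝ) (ht : ∀ v, v ∉ Ω → t v = 0) :
    ∑ y ∈ (hloc x).toFinset, b x y * t y = ∑ y ∈ Ω, b x y * t y := by
  rw [← finsum_eq_finset_sum_of_support_subset (fun y => b x y * t y)
      (s := (hloc x).toFinset),
    finsum_eq_finset_sum_of_support_subset (fun y => b x y * t y) (s := Ω)]
  · intro y hy
    simp only [Finset.coe_sort_coe, Finset.mem_coe]
    by_contra h
    exact hy (by simp [ht y h])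
  · intro y hy
    simp only [Set.Finite.coe_toFinset, Set.mem_setOf_eq]
    left
    intro h
    exact hy (by simp [h])

lemma col_sum_le (b : V → V → ℝ) (hb_nonneg : ∀ x y, 0 ≤ b x y)
    (hloc : ∀ x, {y | b x y ≠ 0 ∨ b y x ≠ 0}.Finite)
    (Ω : Finset V) (y : V) :
    ∑ x ∈ Ω, b x y ≤ betaMinus b y := by
  have h1 : betaMinus b y = ∑ x ∈ Ω ∪ (hloc y).toFinset, b x y := by
    apply finsum_eq_finset_sum_of_support_subset
    intro x hx
    simp only [Finset.coe_union, Set.Finite.coe_toFinset, Set.mem_union,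
      Finset.mem_coe, Set.mem_setOf_eq]
    exact Or.inr (Or.inr hx)
  rw [h1]
  exact Finset.sum_le_sum_of_subset_of_nonneg Finset.subset_union_left
    (fun x _ _ => hb_nonneg x y)

end Aux

/-- Suppose the graph is connected and Assumption (β) holds, and let
`Ω ⊆ V` be finite, nonempty and `Ω ≠ V`. Then the smallest and the largest value of the
real Rayleigh quotient of `Δ̃^D_Ω` sum to at most `2`. -/
theorem rayleigh_inf_add_sup_le_two
    (V : Type*) [Countable V] [DecidableEq V] (b : V → V → ℝ)
    (hb_nonneg : ∀ x y, 0 ≤ b x y)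
    (hb_loop : ∀ x, b x x = 0)
    (hloc_fin : ∀ x, {y | b x y ≠ 0 ∨ b y x ≠ 0}.Finite)
    (hβp_pos : ∀ x, 0 < betaPlus b x)
    (hβm_pos : ∀ x, 0 < betaMinus b x)
    (hβ : ∀ x, betaPlus b x = betaMinus b x)
    (hconn : GraphConnected b)
    (Ω : Finset V) (hΩ : Ω.Nonempty) (hΩne : ∃ v : V, v ∉ Ω) :
    sInf {r : ℝ | ∃ f : ↥Ω → ℂ, f ≠ 0 ∧
        r = (innerF (betaPlus b) Ω (dirichletLap b (betaPlus b) Ω f) f).re /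
            (innerF (betaPlus b) Ω f f).re} +
    sSup {r : ℝ | ∃ f : ↥Ω → ℂ, f ≠ 0 ∧
        r = (innerF (betaPlus b) Ω (dirichletLap b (betaPlus b) Ω f) f).re /
            (innerF (betaPlus b) Ω f f).re} ≤ 2 := by
  classical
  set S : Set ℝ := {r : ℝ | ∃ f : ↥Ω → ℂ, f ≠ 0 ∧
        r = (innerF (betaPlus b) Ω (dirichletLap b (betaPlus b) Ω f) f).re /
            (innerF (betaPlus b) Ω f f).re} with hS
  have hβp_ne : ∀ x, betaPlus b x ≠ 0 := fun x => (hβp_pos x).ne'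
  -- positivity of the denominator
  have hNpos : ∀ f : ↥Ω → ℂ, f ≠ 0 → 0 < (innerF (betaPlus b) Ω f f).re := by
    intro f hf
    rw [innerF_self_re]
    obtain ⟨x0, hx0⟩ : ∃ x : ↥Ω, f x ≠ 0 := by
      by_contra h
      push_neg at h
      exact hf (funext h)
    refine Finset.sum_pos' (fun v _ => ?_) ⟨(x0 : V), x0.2, ?_⟩
    · exact mul_nonneg (hβp_pos v).le (Complex.normSq_nonneg _)
    · have : extendZero Ω f ((x0 : V)) = f x0 := extendZero_coe Ω f x0
      rw [this]
      exact mul_pos (hβp_pos _) (Complex.normSq_pos.2 hx0)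
  -- the key Q-comparison: for any f, with g := pointwise norm of f,
  -- N g = N f  and  -(Q g) ≤ Q f  and  Q g ≤ N f
  have key : ∀ f : ↥Ω → ℂ, f ≠ 0 →
      (fun x => (‖f x‖ : ℂ)) ≠ 0 ∧
      (innerF (betaPlus b) Ω (fun x => (‖f x‖ : ℂ)) (fun x => (‖f x‖ : ℂ))).re
        = (innerF (betaPlus b) Ω f f).re ∧
      (innerF (betaPlus b) Ω
          (dirichletLap b (betaPlus b) Ω (fun x => (‖f x‖ : ℂ)))
          (fun x => (‖f x‖ : ℂ))).re
        + (innerF (betaPlus b) Ω (dirichletLap b (betaPlus b) Ω f) f).re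
        ≤ 2 * (innerF (betaPlus b) Ω f f).re ∧
      0 ≤ (innerF (betaPlus b) Ω (dirichletLap b (betaPlus b) Ω f) f).re := by
    intro f hf
    set g : ↥Ω → ℂ := fun x => (‖f x‖ : ℂ) with hg
    set F : V → ℂ := extendZero Ω f with hF
    set G : V → ℝ := fun v => ‖F v‖ with hG
    have hGz : ∀ v, v ∉ Ω → G v = 0 := by
      intro v hv
      simp [hG, hF, extendZero, hv]
    have hGnn : ∀ v, 0 ≤ G v := fun v => norm_nonneg _
    have hEg : extendZero Ω g = fun v => (G v : ℂ) := by
      funext v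
      exact extendZero_norm Ω f v
    have hgne : g ≠ 0 := by
      obtain ⟨x0, hx0⟩ : ∃ x : ↥Ω, f x ≠ 0 := by
        by_contra h
        push_neg at h
        exact hf (funext h)
      intro h
      apply hx0
      have := congrFun h x0
      simpa [hg, norm_eq_zero] using this
    have hnormSqg : ∀ v, Complex.normSq (extendZero Ω g v)
        = Complex.normSq (extendZero Ω f v) := by
      intro v
      rw [hEg]
      simp [hG, Complex.normSq_eq_norm_sq, hF, sq]
    have hNg : (innerF (betaPlus b) Ω g g).re = (innerF (betaPlus b) Ω f f).re := by
      rw [innerF_self_re, innerF_self_re]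
      exact Finset.sum_congr rfl fun v _ => by rw [hnormSqg]
    refine ⟨hgne, hNg, ?_⟩
    rw [lap_energy b hloc_fin hβp_ne Ω g, lap_energy b hloc_fin hβp_ne Ω f]
    rw [innerF_self_re]
    have hNN : (∑ v ∈ Ω, betaPlus b v * Complex.normSq (extendZero Ω g v))
        = ∑ v ∈ Ω, betaPlus b v * Complex.normSq (extendZero Ω f v) :=
      Finset.sum_congr rfl fun v _ => by rw [hnormSqg]
    rw [hNN]
    set N : ℝ := ∑ v ∈ Ω, betaPlus b v * Complex.normSq (extendZero Ω f v) with hN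
    set Qf : ℝ := ∑ v ∈ Ω, ∑ y ∈ (hloc_fin v).toFinset,
        b v y * (extendZero Ω f y * (starRingEnd ℂ) (extendZero Ω f v)).re with hQf
    set Qg : ℝ := ∑ v ∈ Ω, ∑ y ∈ (hloc_fin v).toFinset,
        b v y * (extendZero Ω g y * (starRingEnd ℂ) (extendZero Ω g v)).re with hQg
    -- Qg = sum of b x y * G y * G x
    have hQg' : Qg = ∑ v ∈ Ω, ∑ y ∈ (hloc_fin v).toFinset, b v y * (G y * G v) := by
      rw [hQg]
      refine Finset.sum_congr rfl fun v _ => Finset.sum_congr rfl fun y _ => ?_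
      rw [hEg]
      congr 1
      simp [← Complex.ofReal_mul]
    -- -(Qg) ≤ Qf
    have hQfQg : -Qg ≤ Qf := by
      rw [hQg', hQf, ← Finset.sum_neg_distrib]
      refine Finset.sum_le_sum fun v _ => ?_
      rw [← Finset.sum_neg_distrib]
      refine Finset.sum_le_sum fun y _ => ?_
      rw [← mul_neg]
      refine mul_le_mul_of_nonneg_left ?_ (hb_nonneg v y)
      have habs := Complex.abs_re_le_norm (extendZero Ω f y *
        (starRingEnd ℂ) (extendZero Ω f v))
      have heq : ‖extendZero Ω f y * (starRingEnd ℂ) (extendZero Ω f v)‖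
          = G y * G v := by
        simp [hG, hF]
      rw [heq] at habs
      linarith [neg_abs_le ((extendZero Ω f y * (starRingEnd ℂ) (extendZero Ω f v)).re)]
    -- Qg ≤ N
    have hQgN : Qg ≤ N := by
      have hsplit : Qg ≤ (∑ v ∈ Ω, ∑ y ∈ (hloc_fin v).toFinset,
            b v y * (G v ^ 2 / 2))
          + ∑ v ∈ Ω, ∑ y ∈ (hloc_fin v).toFinset, b v y * (G y ^ 2 / 2) := by
        rw [hQg', ← Finset.sum_add_distrib]
        refine Finset.sum_le_sum fun v _ => ?_
        rw [← Finset.sum_add_distrib]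
        refine Finset.sum_le_sum fun y _ => ?_
        rw [← mul_add]
        refine mul_le_mul_of_nonneg_left ?_ (hb_nonneg v y)
        nlinarith [sq_nonneg (G y - G v)]
      have h1 : (∑ v ∈ Ω, ∑ y ∈ (hloc_fin v).toFinset, b v y * (G v ^ 2 / 2))
          = ∑ v ∈ Ω, betaPlus b v * (G v ^ 2 / 2) := by
        refine Finset.sum_congr rfl fun v _ => ?_
        rw [← Finset.sum_mul, ← betaPlus_eq_sum b hloc_fin]
      have h2 : (∑ v ∈ Ω, ∑ y ∈ (hloc_fin v).toFinset, b v y * (G y ^ 2 / 2))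
          ≤ ∑ y ∈ Ω, betaPlus b y * (G y ^ 2 / 2) := by
        have hrw : ∀ v ∈ Ω, ∑ y ∈ (hloc_fin v).toFinset, b v y * (G y ^ 2 / 2)
            = ∑ y ∈ Ω, b v y * (G y ^ 2 / 2) := by
          intro v _
          exact inner_sum_eq_omega b hloc_fin Ω v (fun y => G y ^ 2 / 2)
            (fun y hy => by show G y ^ 2 / 2 = 0; rw [hGz y hy]; ring)
        rw [Finset.sum_congr rfl hrw, Finset.sum_comm]
        refine Finset.sum_le_sum fun y _ => ?_
        rw [← Finset.sum_mul]
        refine mul_le_mul_of_nonneg_right ?_ (by positivity)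
        rw [hβ y]
        exact col_sum_le b hb_nonneg hloc_fin Ω y
      have hNhalf : N = (∑ v ∈ Ω, betaPlus b v * (G v ^ 2 / 2))
          + ∑ v ∈ Ω, betaPlus b v * (G v ^ 2 / 2) := by
        rw [← Finset.sum_add_distrib, hN]
        refine Finset.sum_congr rfl fun v _ => ?_
        have : Complex.normSq (extendZero Ω f v) = G v ^ 2 := by
          simp [hG, hF, Complex.normSq_eq_norm_sq]
        rw [this]
        ring
      calc Qg ≤ _ := hsplit
        _ ≤ (∑ v ∈ Ω, betaPlus b v * (G v ^ 2 / 2))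
            + ∑ v ∈ Ω, betaPlus b v * (G v ^ 2 / 2) := by rw [h1]; gcongr
        _ = N := hNhalf.symm
    have hQfQg2 : Qf ≤ Qg := by
      rw [hQg', hQf]
      refine Finset.sum_le_sum fun v _ => Finset.sum_le_sum fun y _ => ?_
      refine mul_le_mul_of_nonneg_left ?_ (hb_nonneg v y)
      have habs := Complex.abs_re_le_norm (extendZero Ω f y *
        (starRingEnd ℂ) (extendZero Ω f v))
      have heq : ‖extendZero Ω f y * (starRingEnd ℂ) (extendZero Ω f v)‖
          = G y * G v := by
        simp [hG, hF]
      rw [heq] at habs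
      exact le_trans (le_abs_self _) habs
    constructor
    · linarith
    · linarith
  -- membership, nonemptiness, bounds
  have hNonempty : S.Nonempty := by
    refine ⟨_, (fun _ => (1 : ℂ)), ?_, rfl⟩
    obtain ⟨x0, hx0⟩ := hΩ
    intro h
    have := congrFun h ⟨x0, hx0⟩
    simp at this
  have hBddBelow : BddBelow S := by
    refine ⟨0, fun r hr => ?_⟩
    obtain ⟨f, hf, rfl⟩ := hr
    have hN := hNpos f hf
    obtain ⟨-, -, -, hEf⟩ := key f hf
    exact div_nonneg hEf hN.le
  have hsup : sSup S ≤ 2 - sInf S := by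
    refine csSup_le hNonempty fun r hr => ?_
    obtain ⟨f, hf, rfl⟩ := hr
    have hN := hNpos f hf
    obtain ⟨hgne, hNg, hsum, -⟩ := key f hf
    have hmem : (innerF (betaPlus b) Ω
        (dirichletLap b (betaPlus b) Ω (fun x => (‖f x‖ : ℂ)))
        (fun x => (‖f x‖ : ℂ))).re /
        (innerF (betaPlus b) Ω (fun x => (‖f x‖ : ℂ)) (fun x => (‖f x‖ : ℂ))).re ∈ S :=
      ⟨(fun x => (‖f x‖ : ℂ)), hgne, rfl⟩
    have hinf := csInf_le hBddBelow hmem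
    rw [hNg] at hinf
    set Eg := (innerF (betaPlus b) Ω
        (dirichletLap b (betaPlus b) Ω (fun x => (‖f x‖ : ℂ)))
        (fun x => (‖f x‖ : ℂ))).re
    set Ef := (innerF (betaPlus b) Ω (dirichletLap b (betaPlus b) Ω f) f).re
    set Nf := (innerF (betaPlus b) Ω f f).re
    have hdiv : (Eg + Ef) / Nf ≤ 2 := (div_le_iff₀ hN).mpr (by linarith)
    rw [add_div] at hdiv
    linarith
  linarith
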